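/- arXiv:2408.12001 — 5 statements merged into one kernel-verified Lean document; each statement's English description precedes it below -/
import Mathlib

section
/- (Proposition 3, tightness in k.) Fix v̄ = 1. For every M ≥ 1, every menu 𝓜, every N and k with 2 ≤ k ≤ N and N ≥ |𝓜| + 1, there exists a Borel probability measure G on valuations such that, taking 𝔾 = {G} and the ambiguity set 𝔽 = {F : F̄ ∈ 𝔾}, one has inf_{F∈𝔽} E_F[Rᵏ_𝓜(v)] ≤ inf_{F∈𝔽} V_𝓜(F) − (k−1)/(2N). -/
open MeasureTheory
open scoped ENNReal BigOperators

namespace RankGuaranteedAuctions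

/-- A bundle of items, where the set of items is `Fin M`. -/
abbrev Bundle (M : ℕ) := Finset (Fin M)

/-- A valuation assigns a real value to every bundle. -/
abbrev Valuation (M : ℕ) := Bundle M → ℝ

/-- A valuation is normalized: value `0` for the empty bundle and values in `[0, vbar]`. -/
def IsValuation (M : ℕ) (vbar : ℝ) (v : Valuation M) : Prop :=
  v ∅ = 0 ∧ ∀ b : Bundle M, 0 ≤ v b ∧ v b ≤ vbar

/-- A menu is a nonempty collection of nonempty bundles. -/
def IsMenu (M : ℕ) (Menu : Finset (Bundle M)) : Prop :=
  Menu.Nonempty ∧ ∅ ∉ Menu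

/-- The complete menu `2^S` of all nonempty bundles. -/
noncomputable def completeMenu (M : ℕ) : Finset (Bundle M) :=
  Finset.univ.erase ∅

/-- A feasible allocation: a set of pairwise disjoint bundles from the menu. -/
def Feasible (M : ℕ) (Menu X : Finset (Bundle M)) : Prop :=
  X ⊆ Menu ∧ ∀ b ∈ X, ∀ b' ∈ X, b ≠ b' → Disjoint b b'

/-- The maximum of `∑ b ∈ X, f b` over feasible allocations `X` from the menu. -/
noncomputable def maxAlloc (M : ℕ) (Menu : Finset (Bundle M)) (f : Bundle M → ℝ) : ℝ :=
  sSup {y : ℝ | ∃ X : Finset (Bundle M), Feasible M Menu X ∧ y = ∑ b ∈ X, f b}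

/-- The `k`-th highest value among `w 0, …, w (N-1)` (for `1 ≤ k ≤ N`):
the maximum over sets `T` of `k` bidders of the minimum of `w` on `T`. -/
noncomputable def kthHighest (N : ℕ) (w : Fin N → ℝ) (k : ℕ) : ℝ :=
  sSup {x : ℝ | ∃ T : Finset (Fin N), T.card = k ∧ x = sInf (w '' (T : Set (Fin N)))}

/-- The `k`-th rank guarantee `R^k_𝓜(v)`. -/
noncomputable def rankGuarantee (M N : ℕ) (Menu : Finset (Bundle M))
    (v : Fin N → Valuation M) (k : ℕ) : ℝ :=
  maxAlloc M Menu fun b => kthHighest N (fun n => v n b) k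

/-- The ex-post efficient surplus: the maximum over feasible allocations `X` with
`|X| ≤ N` and injective assignments `ι` of bundles in `X` to bidders of the total value. -/
noncomputable def surplusEx (M N : ℕ) (Menu : Finset (Bundle M))
    (v : Fin N → Valuation M) : ℝ :=
  sSup {y : ℝ | ∃ X : Finset (Bundle M), Feasible M Menu X ∧ X.card ≤ N ∧
    ∃ ι : Bundle M → Fin N, Set.InjOn ι ↑X ∧ y = ∑ b ∈ X, v (ι b) b}

/-- The average `F̄ = (1/N) ∑ₙ Fₙ` of the bidder-marginals of `F`. -/
noncomputable def avgMarginal (M N : ℕ) (F : Measure (Fin N → Valuation M)) :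
    Measure (Valuation M) :=
  (N : ℝ≥0∞)⁻¹ • ∑ n : Fin N, F.map (fun v => v n)

/-- The ex-ante efficient surplus `V_𝓜(F)`. -/
noncomputable def Vsurplus (M N : ℕ) (Menu : Finset (Bundle M))
    (F : Measure (Fin N → Valuation M)) : ℝ :=
  ∫ v, surplusEx M N Menu v ∂F

/-- A Borel probability measure on valuation profiles (supported on profiles of
valuations bounded by `vbar`). -/
def ProfileOK (M N : ℕ) (vbar : ℝ) (F : Measure (Fin N → Valuation M)) : Prop :=
  IsProbabilityMeasure F ∧ F {v | ∀ n, IsValuation M vbar (v n)} = 1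

/-- A Borel probability measure on valuations (supported on valuations bounded by `vbar`). -/
def ValOK (M : ℕ) (vbar : ℝ) (G : Measure (Valuation M)) : Prop :=
  IsProbabilityMeasure G ∧ G {w | IsValuation M vbar w} = 1

/-- `κ` is a partition of the bundle `b` into nonempty, pairwise disjoint parts. -/
def IsPartitionOf (M : ℕ) (κ : Finset (Bundle M)) (b : Bundle M) : Prop :=
  (∀ c ∈ κ, c ≠ ∅) ∧ (∀ c ∈ κ, ∀ c' ∈ κ, c ≠ c' → Disjoint c c') ∧ κ.sup id = b

/-- Feasibility for homogeneous goods: total number of allocated items is at most `M`. -/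
def FeasibleQ (M : ℕ) (Menu X : Finset (Bundle M)) : Prop :=
  X ⊆ Menu ∧ ∑ b ∈ X, b.card ≤ M

/-- The maximum of `∑ b ∈ X, f b` over homogeneous-goods-feasible allocations `X`. -/
noncomputable def maxAllocQ (M : ℕ) (Menu : Finset (Bundle M)) (f : Bundle M → ℝ) : ℝ :=
  sSup {y : ℝ | ∃ X : Finset (Bundle M), FeasibleQ M Menu X ∧ y = ∑ b ∈ X, f b}

/-- An assignment of pairwise disjoint bundles to the `N` bidders. -/
def IsAssignment (M N : ℕ) (a : Fin N → Bundle M) : Prop :=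
  ∀ n n' : Fin N, n ≠ n' → Disjoint (a n) (a n')

/-- An assignment is efficient if it maximizes total value over all assignments. -/
def IsEfficient (M N : ℕ) (v : Fin N → Valuation M) (a : Fin N → Bundle M) : Prop :=
  IsAssignment M N a ∧
    ∀ a' : Fin N → Bundle M, IsAssignment M N a' → ∑ n, v n (a' n) ≤ ∑ n, v n (a n)

/-- The VCG revenue at the efficient assignment `a`: the sum over bidders `n` of
`max_{assignments to bidders other than n} ∑_{n' ≠ n} v^{n'} − ∑_{n' ≠ n} v^{n'}(a n')`. -/
noncomputable def vcgRevenue (M N : ℕ) (v : Fin N → Valuation M)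
    (a : Fin N → Bundle M) : ℝ :=
  ∑ n : Fin N,
    (sSup {y : ℝ | ∃ a' : Fin N → Bundle M, IsAssignment M N a' ∧ a' n = ∅ ∧
        y = ∑ n' ∈ Finset.univ.erase n, v n' (a' n')}
      - ∑ n' ∈ Finset.univ.erase n, v n' (a n'))

/-- An unbounded valuation: value `0` for the empty bundle and nonnegative values. -/
def IsValuationNN (M : ℕ) (v : Valuation M) : Prop :=
  v ∅ = 0 ∧ ∀ b : Bundle M, 0 ≤ v b

/-- The top-`(k-1)/N` quantile of `v b` under `G`. -/
noncomputable def quantileQ (M N k : ℕ) (G : Measure (Valuation M)) (b : Bundle M) : ℝ :=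
  sInf {q : ℝ | 0 ≤ q ∧ G {w | q < w b} ≤ ((k - 1 : ℕ) : ℝ≥0∞) / (N : ℝ≥0∞)}


/-! ### Auxiliary lemmas -/

section Aux

open scoped Classical

variable {M N : ℕ}

lemma integral_two_point {α : Type*} [MeasurableSpace α] [MeasurableSingletonClass α]
    (p q : ℝ≥0∞) (hp : p ≠ ∞) (hq : q ≠ ∞) (a b : α) (f : α → ℝ) :
    ∫ x, f x ∂(p • Measure.dirac a + q • Measure.dirac b)
      = p.toReal * f a + q.toReal * f b := by
  classical
  set g : α → ℝ := fun x => if x = a then f a else f b with hgdef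
  have hmg : Measurable g := by
    apply Measurable.ite _ measurable_const measurable_const
    simpa [Set.setOf_eq_eq_singleton] using (measurableSet_singleton a)
  have hgb : g b = f b := by by_cases hba : b = a <;> simp [hgdef, hba]
  have hga : g a = f a := by simp [hgdef]
  have hcongr : f =ᵐ[p • Measure.dirac a + q • Measure.dirac b] g := by
    rw [Filter.EventuallyEq, ae_iff]
    refine measure_mono_null (fun x hx => ?_) (t := ({a, b} : Set α)ᶜ) ?_
    · simp only [Set.mem_compl_iff, Set.mem_insert_iff, Set.mem_singleton_iff]
      rintro (rfl | rfl)
      · exact hx hga.symm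
      · exact hx hgb.symm
    · simp [Measure.add_apply, Measure.smul_apply, Measure.dirac_apply]
  have hbound : ∀ x, ‖g x‖ ≤ max ‖f a‖ ‖f b‖ := by
    intro x
    by_cases hx : x = a <;> simp only [hgdef, hx, if_true, if_false]
    · exact le_max_left _ _
    · exact le_max_right _ _
  have hia : Integrable g (Measure.dirac a) :=
    Integrable.mono' (integrable_const _) hmg.aestronglyMeasurable
      (Filter.Eventually.of_forall hbound)
  have hib : Integrable g (Measure.dirac b) :=
    Integrable.mono' (integrable_const _) hmg.aestronglyMeasurable
      (Filter.Eventually.of_forall hbound)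
  rw [integral_congr_ae hcongr,
    integral_add_measure (hia.smul_measure hp) (hib.smul_measure hq),
    integral_smul_measure, integral_smul_measure, integral_dirac, integral_dirac,
    hga, hgb, smul_eq_mul, smul_eq_mul]

lemma card_filter_lt_fin (N e : ℕ) (he : e ≤ N) :
    (Finset.univ.filter (fun n : Fin N => (n : ℕ) < e)).card = e := by
  classical
  have h : (Finset.univ.filter (fun n : Fin N => (n : ℕ) < e)).image Fin.val
      = Finset.range e := by
    ext i
    simp only [Finset.mem_image, Finset.mem_filter, Finset.mem_univ, true_and,
      Finset.mem_range]
    constructor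
    · rintro ⟨n, hn, rfl⟩; exact hn
    · intro hi; exact ⟨⟨i, lt_of_lt_of_le hi he⟩, hi, rfl⟩
  calc (Finset.univ.filter (fun n : Fin N => (n : ℕ) < e)).card
      = ((Finset.univ.filter (fun n : Fin N => (n : ℕ) < e)).image Fin.val).card :=
        (Finset.card_image_of_injective _ Fin.val_injective).symm
    _ = e := by rw [h, Finset.card_range]

lemma sum_dirac_profile {α : Type*} [MeasurableSpace α] (N e : ℕ) (he : e ≤ N) (x y : α) :
    (∑ n : Fin N, Measure.dirac (if (n : ℕ) < e then x else y)) =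
      ((e : ℝ≥0∞)) • Measure.dirac x + (((N - e : ℕ) : ℝ≥0∞)) • Measure.dirac y := by
  classical
  have h1 : ∀ n : Fin N, (Measure.dirac (if (n : ℕ) < e then x else y) : Measure α)
      = if (n : ℕ) < e then Measure.dirac x else Measure.dirac y := by
    intro n; by_cases h : (n : ℕ) < e <;> simp [h]
  rw [Finset.sum_congr rfl (fun n _ => h1 n), Finset.sum_ite, Finset.sum_const,
    Finset.sum_const]
  have hcard1 : (Finset.univ.filter (fun n : Fin N => (n : ℕ) < e)).card = e :=
    card_filter_lt_fin N e he
  have hcard2 : (Finset.univ.filter (fun n : Fin N => ¬ ((n : ℕ) < e))).card = N - e := by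
    have := Finset.card_filter_add_card_filter_not
      (s := (Finset.univ : Finset (Fin N))) (p := fun n : Fin N => (n : ℕ) < e)
    simp only [Finset.card_univ, Fintype.card_fin] at this
    omega
  rw [hcard1, hcard2, ← Nat.cast_smul_eq_nsmul ℝ≥0∞, ← Nat.cast_smul_eq_nsmul ℝ≥0∞]


lemma kthHighest_const {N : ℕ} (k : ℕ) (hk0 : 0 < k) (hkN : k ≤ N) (x : ℝ) :
    kthHighest N (fun _ => x) k = x := by
  have hTex : ∃ T : Finset (Fin N), T.card = k := by
    obtain ⟨T, _, hT⟩ := Finset.exists_subset_card_eq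
      (s := (Finset.univ : Finset (Fin N))) (by simpa using hkN)
    exact ⟨T, hT⟩
  have himg : ∀ T : Finset (Fin N), T.card = k →
      (fun _ : Fin N => x) '' (T : Set (Fin N)) = {x} := by
    intro T hT
    have hne : (T : Set (Fin N)).Nonempty := by
      rw [Finset.coe_nonempty, ← Finset.card_pos, hT]; exact hk0
    exact Set.Nonempty.image_const hne x
  have hset : {z : ℝ | ∃ T : Finset (Fin N), T.card = k ∧
      z = sInf ((fun _ : Fin N => x) '' (T : Set (Fin N)))} = {x} := by
    ext z
    simp only [Set.mem_setOf_eq, Set.mem_singleton_iff]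
    constructor
    · rintro ⟨T, hT, rfl⟩
      rw [himg T hT, csInf_singleton]
    · rintro rfl
      obtain ⟨T, hT⟩ := hTex
      exact ⟨T, hT, by rw [himg T hT, csInf_singleton]⟩
  rw [kthHighest, hset, csSup_singleton]

lemma kthHighest_eq_zero {N : ℕ} (k : ℕ) (w : Fin N → ℝ) (hw : ∀ n, 0 ≤ w n)
    (hzero : ∀ T : Finset (Fin N), T.card = k → ∃ n ∈ T, w n = 0)
    (hk0 : 0 < k) (hkN : k ≤ N) :
    kthHighest N w k = 0 := by
  have hTex : ∃ T : Finset (Fin N), T.card = k := by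
    obtain ⟨T, _, hT⟩ := Finset.exists_subset_card_eq
      (s := (Finset.univ : Finset (Fin N))) (by simpa using hkN)
    exact ⟨T, hT⟩
  have hinf : ∀ T : Finset (Fin N), T.card = k →
      sInf (w '' (T : Set (Fin N))) = 0 := by
    intro T hT
    obtain ⟨n₀, hn₀, h0⟩ := hzero T hT
    have hmem : (0 : ℝ) ∈ w '' (T : Set (Fin N)) := ⟨n₀, by simpa using hn₀, h0⟩
    apply le_antisymm
    · exact csInf_le ⟨0, by rintro y ⟨m, _, rfl⟩; exact hw m⟩ hmem
    · exact le_csInf ⟨0, hmem⟩ (by rintro y ⟨m, _, rfl⟩; exact hw m)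
  have hset : {z : ℝ | ∃ T : Finset (Fin N), T.card = k ∧
      z = sInf (w '' (T : Set (Fin N)))} = {0} := by
    ext z
    simp only [Set.mem_setOf_eq, Set.mem_singleton_iff]
    constructor
    · rintro ⟨T, hT, rfl⟩; exact hinf T hT
    · rintro rfl
      obtain ⟨T, hT⟩ := hTex
      exact ⟨T, hT, (hinf T hT).symm⟩
  rw [kthHighest, hset, csSup_singleton]

lemma zero_mem_maxAllocSet (M : ℕ) (Menu : Finset (Bundle M)) (f : Bundle M → ℝ) :
    (0 : ℝ) ∈ {y : ℝ | ∃ X : Finset (Bundle M), Feasible M Menu X ∧ y = ∑ b ∈ X, f b} :=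
  ⟨∅, ⟨Finset.empty_subset _, fun b hb => absurd hb (Finset.notMem_empty b)⟩,
    by simp⟩

lemma bddAbove_maxAllocSet (M : ℕ) (Menu : Finset (Bundle M)) (f : Bundle M → ℝ) :
    BddAbove {y : ℝ | ∃ X : Finset (Bundle M), Feasible M Menu X ∧ y = ∑ b ∈ X, f b} := by
  apply Set.Finite.bddAbove
  apply Set.Finite.subset (Set.finite_range (fun X : Finset (Bundle M) => ∑ b ∈ X, f b))
  rintro y ⟨X, _, rfl⟩
  exact ⟨X, rfl⟩

lemma maxAlloc_nonneg (M : ℕ) (Menu : Finset (Bundle M)) (f : Bundle M → ℝ) :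
    0 ≤ maxAlloc M Menu f :=
  le_csSup (bddAbove_maxAllocSet M Menu f) (zero_mem_maxAllocSet M Menu f)

lemma maxAlloc_eq_zero (M : ℕ) (Menu : Finset (Bundle M)) (f : Bundle M → ℝ)
    (h : ∀ b, f b = 0) : maxAlloc M Menu f = 0 := by
  have hset : {y : ℝ | ∃ X : Finset (Bundle M), Feasible M Menu X ∧ y = ∑ b ∈ X, f b}
      = {0} := by
    ext y
    simp only [Set.mem_setOf_eq, Set.mem_singleton_iff]
    constructor
    · rintro ⟨X, _, rfl⟩
      exact Finset.sum_eq_zero fun b _ => h b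
    · rintro rfl
      exact zero_mem_maxAllocSet M Menu f
  rw [maxAlloc, hset, csSup_singleton]

lemma maxAlloc_le (M : ℕ) (Menu : Finset (Bundle M)) (f : Bundle M → ℝ) (C : ℝ)
    (h : ∀ X : Finset (Bundle M), Feasible M Menu X → ∑ b ∈ X, f b ≤ C) :
    maxAlloc M Menu f ≤ C := by
  apply csSup_le ⟨0, zero_mem_maxAllocSet M Menu f⟩
  rintro y ⟨X, hX, rfl⟩
  exact h X hX

lemma rankGuarantee_nonneg (M N : ℕ) (Menu : Finset (Bundle M))
    (v : Fin N → Valuation M) (k : ℕ) : 0 ≤ rankGuarantee M N Menu v k :=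
  maxAlloc_nonneg M Menu _

noncomputable def allocPairs (M N : ℕ) (Menu : Finset (Bundle M)) :
    Finset (Finset (Bundle M) × (Bundle M → Fin N)) :=
  Finset.univ.filter fun p => Feasible M Menu p.1 ∧ p.1.card ≤ N ∧ Set.InjOn p.2 ↑p.1

lemma mem_allocPairs {M N : ℕ} {Menu : Finset (Bundle M)}
    {p : Finset (Bundle M) × (Bundle M → Fin N)} :
    p ∈ allocPairs M N Menu ↔
      Feasible M Menu p.1 ∧ p.1.card ≤ N ∧ Set.InjOn p.2 ↑p.1 := by
  simp [allocPairs]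

lemma allocPairs_nonempty (M N : ℕ) (Menu : Finset (Bundle M)) (hN : 0 < N) :
    (allocPairs M N Menu).Nonempty := by
  refine ⟨(∅, fun _ => ⟨0, hN⟩), mem_allocPairs.2 ⟨⟨Finset.empty_subset _, ?_⟩, ?_, ?_⟩⟩
  · intro b hb; exact absurd hb (Finset.notMem_empty b)
  · simp
  · simp

lemma surplusEx_eq_sup' (M N : ℕ) (Menu : Finset (Bundle M)) (hN : 0 < N)
    (v : Fin N → Valuation M) :
    surplusEx M N Menu v = (allocPairs M N Menu).sup' (allocPairs_nonempty M N Menu hN)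
      (fun p => ∑ b ∈ p.1, v (p.2 b) b) := by
  rw [Finset.sup'_eq_csSup_image, surplusEx]
  congr 1
  ext y
  simp only [Set.mem_setOf_eq, Set.mem_image, Finset.mem_coe, mem_allocPairs]
  constructor
  · rintro ⟨X, hF, hc, ι, hι, rfl⟩
    exact ⟨(X, ι), ⟨hF, hc, hι⟩, rfl⟩
  · rintro ⟨⟨X, ι⟩, ⟨hF, hc, hι⟩, rfl⟩
    exact ⟨X, hF, hc, ι, hι, rfl⟩

lemma measurable_surplusEx (M N : ℕ) (Menu : Finset (Bundle M)) (hN : 0 < N) :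
    Measurable (surplusEx M N Menu) := by
  have h : surplusEx M N Menu = fun v =>
      (allocPairs M N Menu).sup' (allocPairs_nonempty M N Menu hN)
        (fun p => ∑ b ∈ p.1, v (p.2 b) b) :=
    funext (surplusEx_eq_sup' M N Menu hN)
  rw [h]
  have h2 : (fun v : Fin N → Valuation M =>
      (allocPairs M N Menu).sup' (allocPairs_nonempty M N Menu hN)
        (fun p => ∑ b ∈ p.1, v (p.2 b) b))
      = (allocPairs M N Menu).sup' (allocPairs_nonempty M N Menu hN)
        (fun p (v : Fin N → Valuation M) => ∑ b ∈ p.1, v (p.2 b) b) := by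
    ext v
    rw [Finset.sup'_apply]
  rw [h2]
  apply Finset.measurable_sup'
  intro p _
  apply Finset.measurable_sum
  intro b _
  exact (measurable_pi_apply b).comp (measurable_pi_apply (p.2 b))

lemma le_surplusEx (M N : ℕ) (Menu : Finset (Bundle M)) (hN : 0 < N)
    {b₀ : Bundle M} (hb₀ : b₀ ∈ Menu) (v : Fin N → Valuation M) (n : Fin N) :
    v n b₀ ≤ surplusEx M N Menu v := by
  rw [surplusEx_eq_sup' M N Menu hN]
  have hmem : (({b₀}, fun _ => n) : Finset (Bundle M) × (Bundle M → Fin N))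
      ∈ allocPairs M N Menu := by
    refine mem_allocPairs.2 ⟨⟨Finset.singleton_subset_iff.2 hb₀, ?_⟩, by rw [Finset.card_singleton]; exact hN, ?_⟩
    · intro b hb b' hb' hne
      rw [Finset.mem_singleton] at hb hb'
      exact absurd (hb.trans hb'.symm) hne
    · intro x hx y hy _
      simp only [Finset.coe_singleton, Set.mem_singleton_iff] at hx hy
      rw [hx, hy]
  have := Finset.le_sup' (fun p : Finset (Bundle M) × (Bundle M → Fin N) =>
    ∑ b ∈ p.1, v (p.2 b) b) hmem
  simpa only [Finset.sum_singleton] using this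

lemma surplusEx_nonneg (M N : ℕ) (Menu : Finset (Bundle M)) (hN : 0 < N)
    (v : Fin N → Valuation M) : 0 ≤ surplusEx M N Menu v := by
  rw [surplusEx_eq_sup' M N Menu hN]
  have hmem : ((∅, fun _ => ⟨0, hN⟩) : Finset (Bundle M) × (Bundle M → Fin N))
      ∈ allocPairs M N Menu :=
    mem_allocPairs.2 ⟨⟨Finset.empty_subset _,
      fun b hb => absurd hb (Finset.notMem_empty b)⟩, by simp, by simp⟩
  have := Finset.le_sup' (fun p : Finset (Bundle M) × (Bundle M → Fin N) =>
    ∑ b ∈ p.1, v (p.2 b) b) hmem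
  simpa only [Finset.sum_empty] using this

lemma surplusEx_le (M N : ℕ) (Menu : Finset (Bundle M)) (hN : 0 < N)
    (v : Fin N → Valuation M) (hv : ∀ n, IsValuation M 1 (v n)) :
    surplusEx M N Menu v ≤ N := by
  rw [surplusEx_eq_sup' M N Menu hN]
  apply Finset.sup'_le
  intro p hp
  obtain ⟨hF, hc, hι⟩ := mem_allocPairs.1 hp
  calc ∑ b ∈ p.1, v (p.2 b) b ≤ ∑ _b ∈ p.1, (1 : ℝ) :=
        Finset.sum_le_sum fun b _ => ((hv (p.2 b)).2 b).2
    _ = p.1.card := by simp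
    _ ≤ N := by exact_mod_cast hc


lemma measurableSet_isValuation (M : ℕ) :
    MeasurableSet {w : Valuation M | IsValuation M 1 w} := by
  have h : {w : Valuation M | IsValuation M 1 w}
      = ((fun w : Valuation M => w ∅) ⁻¹' {0}) ∩
        ⋂ b : Bundle M, ((fun w : Valuation M => w b) ⁻¹' Set.Icc (0:ℝ) 1) := by
    ext w
    simp [IsValuation, Set.mem_iInter, Set.mem_Icc]
  rw [h]
  exact (measurable_pi_apply ∅ (measurableSet_singleton 0)).inter
    (MeasurableSet.iInter fun b => measurable_pi_apply b measurableSet_Icc)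

lemma measurableSet_goodProfile (M N : ℕ) :
    MeasurableSet {v : Fin N → Valuation M | ∀ n, IsValuation M 1 (v n)} := by
  have h : {v : Fin N → Valuation M | ∀ n, IsValuation M 1 (v n)}
      = ⋂ n, (fun v : Fin N → Valuation M => v n) ⁻¹' {w | IsValuation M 1 w} := by
    ext v; simp [Set.mem_iInter]
  rw [h]
  exact MeasurableSet.iInter fun n => measurable_pi_apply n (measurableSet_isValuation M)

lemma half_le_Vsurplus (M N : ℕ) (hN : 0 < N) (Menu : Finset (Bundle M))
    {b₀ : Bundle M} (hb₀ : b₀ ∈ Menu) {i₀ : Fin M} (hi₀ : i₀ ∈ b₀)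
    (F : Measure (Fin N → Valuation M)) (hPOK : ProfileOK M N 1 F)
    (havg : avgMarginal M N F
      = (2⁻¹ : ℝ≥0∞) • Measure.dirac (fun b : Bundle M => if i₀ ∈ b then (1:ℝ) else 0)
        + (2⁻¹ : ℝ≥0∞) • Measure.dirac (fun _ : Bundle M => (0:ℝ))) :
    1 / 2 ≤ Vsurplus M N Menu F := by
  obtain ⟨hprob, hsupp⟩ := hPOK
  haveI := hprob
  have hNR : (0 : ℝ) < N := by exact_mod_cast hN
  -- a.e. every bidder's valuation is a valuation
  have hbad : F {v : Fin N → Valuation M | ∀ n, IsValuation M 1 (v n)}ᶜ = 0 := by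
    rw [measure_compl (measurableSet_goodProfile M N) (measure_ne_top _ _), hsupp]
    simp
  have hae : ∀ᵐ v ∂F, ∀ n, IsValuation M 1 (v n) := by
    rw [ae_iff]
    exact measure_mono_null (fun v hv => hv) hbad
  -- integrability
  have hint_surplus : Integrable (surplusEx M N Menu) F := by
    refine Integrable.mono' (integrable_const (N : ℝ))
      (measurable_surplusEx M N Menu hN).aestronglyMeasurable ?_
    filter_upwards [hae] with v hv
    rw [Real.norm_eq_abs, abs_of_nonneg (surplusEx_nonneg M N Menu hN v)]
    exact surplusEx_le M N Menu hN v hv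
  have hint_eval : ∀ n : Fin N, Integrable (fun v : Fin N → Valuation M => v n b₀) F := by
    intro n
    have hm : Measurable (fun v : Fin N → Valuation M => v n b₀) := by
      exact (measurable_pi_apply b₀).comp (measurable_pi_apply n)
    refine Integrable.mono' (integrable_const (1 : ℝ)) hm.aestronglyMeasurable ?_
    filter_upwards [hae] with v hv
    rw [Real.norm_eq_abs, abs_of_nonneg ((hv n).2 b₀).1]
    exact ((hv n).2 b₀).2
  -- pointwise bound and integral comparison
  have hsum_le : ∑ n : Fin N, ∫ v, v n b₀ ∂F ≤ (N : ℝ) * ∫ v, surplusEx M N Menu v ∂F := by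
    rw [← integral_finset_sum _ (fun n _ => hint_eval n), ← integral_const_mul]
    apply integral_mono (integrable_finset_sum _ fun n _ => hint_eval n)
      (hint_surplus.const_mul _)
    intro v
    calc ∑ n : Fin N, v n b₀ ≤ ∑ _n : Fin N, surplusEx M N Menu v :=
          Finset.sum_le_sum fun n _ => le_surplusEx M N Menu hN hb₀ v n
      _ = (N : ℝ) * surplusEx M N Menu v := by
          simp [Finset.sum_const, Finset.card_univ, nsmul_eq_mul]
  -- compute the sum of marginal integrals via G
  have hmapint : ∀ n : Fin N,
      Integrable (fun w : Valuation M => w b₀) (F.map (fun v => v n)) := by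
    intro n
    refine (integrable_map_measure ?_ ?_).2 (hint_eval n)
    · exact (measurable_pi_apply b₀).aestronglyMeasurable
    · exact (measurable_pi_apply n).aemeasurable
  have hmarg : ∀ n : Fin N, ∫ v, v n b₀ ∂F = ∫ w, w b₀ ∂(F.map (fun v => v n)) := by
    intro n
    rw [integral_map (measurable_pi_apply n).aemeasurable
      (measurable_pi_apply b₀).aestronglyMeasurable]
  have hGval : ∫ w, w b₀ ∂(avgMarginal M N F) = 1 / 2 := by
    rw [havg, integral_two_point 2⁻¹ 2⁻¹ (by simp) (by simp)]
    norm_num [hi₀]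
  have havgint : ∫ w, w b₀ ∂(avgMarginal M N F)
      = (N : ℝ)⁻¹ * ∑ n : Fin N, ∫ w, w b₀ ∂(F.map (fun v => v n)) := by
    rw [avgMarginal, integral_smul_measure, integral_finset_sum_measure
      (fun n _ => hmapint n)]
    simp [ENNReal.toReal_inv]
  have hS : ∑ n : Fin N, ∫ v, v n b₀ ∂F = (N : ℝ) * (1 / 2) := by
    have h1 : (N : ℝ)⁻¹ * ∑ n : Fin N, ∫ v, v n b₀ ∂F = 1 / 2 := by
      rw [Finset.sum_congr rfl fun n _ => hmarg n, ← havgint, hGval]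
    field_simp at h1
    linarith
  have hfinal : (N : ℝ) * (1 / 2) ≤ (N : ℝ) * Vsurplus M N Menu F := by
    rw [Vsurplus]
    rw [hS] at hsum_le
    exact hsum_le
  exact le_of_mul_le_mul_left hfinal hNR


/-- The profile where every bidder has valuation `u`. -/
def constProf (M N : ℕ) (u : Valuation M) : Fin N → Valuation M := fun _ => u

/-- The profile where the first `e` bidders have valuation `ws` and the rest `wz`. -/
noncomputable def stepProf (M N e : ℕ) (ws wz : Valuation M) : Fin N → Valuation M :=
  fun n => if (n : ℕ) < e then ws else wz

/-- The mixture measure used in the tightness construction. -/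
noncomputable def mixM (M N c : ℕ) (u0 : Valuation M) (vb : Fin N → Valuation M) :
    Measure (Fin N → Valuation M) :=
  (((c + N : ℕ) : ℝ≥0∞))⁻¹ •
    ((c : ℝ≥0∞) • Measure.dirac (constProf M N u0) + (N : ℝ≥0∞) • Measure.dirac vb)

lemma mix_s_ne_zero {N c : ℕ} (hN : 0 < N) : ((c + N : ℕ) : ℝ≥0∞) ≠ 0 :=
  Nat.cast_ne_zero.2 (Nat.add_pos_right c hN).ne'

lemma mix_profileOK (M N c : ℕ) (hN : 0 < N) (u0 : Valuation M)
    (vb : Fin N → Valuation M) (hu0 : IsValuation M 1 u0)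
    (hvb : ∀ n, IsValuation M 1 (vb n)) :
    ProfileOK M N 1 (mixM M N c u0 vb) := by
  have hs0 : ((c + N : ℕ) : ℝ≥0∞) ≠ 0 := mix_s_ne_zero hN
  have hstop : ((c + N : ℕ) : ℝ≥0∞) ≠ ⊤ := ENNReal.natCast_ne_top _
  have hcast : ((c : ℝ≥0∞) + (N : ℝ≥0∞)) = ((c + N : ℕ) : ℝ≥0∞) := by push_cast; ring
  constructor
  · constructor
    show mixM M N c u0 vb Set.univ = 1
    rw [mixM, Measure.smul_apply, Measure.add_apply, Measure.smul_apply,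
      Measure.smul_apply, Measure.dirac_apply_of_mem (Set.mem_univ _),
      Measure.dirac_apply_of_mem (Set.mem_univ _)]
    simp only [smul_eq_mul, mul_one]
    rw [hcast, ENNReal.inv_mul_cancel hs0 hstop]
  · rw [mixM, Measure.smul_apply, Measure.add_apply, Measure.smul_apply,
      Measure.smul_apply,
      Measure.dirac_apply_of_mem (by exact fun n => hu0 :
        constProf M N u0 ∈ {v : Fin N → Valuation M | ∀ n, IsValuation M 1 (v n)}),
      Measure.dirac_apply_of_mem (by exact hvb :
        vb ∈ {v : Fin N → Valuation M | ∀ n, IsValuation M 1 (v n)})]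
    simp only [smul_eq_mul, mul_one]
    rw [hcast, ENNReal.inv_mul_cancel hs0 hstop]

lemma mix_avg (M N c e : ℕ) (hN : 0 < N) (he : e ≤ N) (u0 ws wz : Valuation M) :
    avgMarginal M N (mixM M N c u0 (stepProf M N e ws wz))
      = (((c + N : ℕ) : ℝ≥0∞))⁻¹ • ((c : ℝ≥0∞) • Measure.dirac u0 +
          ((e : ℝ≥0∞) • Measure.dirac ws + ((N - e : ℕ) : ℝ≥0∞) • Measure.dirac wz)) := by
  have hN0 : ((N : ℕ) : ℝ≥0∞) ≠ 0 := Nat.cast_ne_zero.2 hN.ne'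
  have hmap : ∀ n : Fin N, (mixM M N c u0 (stepProf M N e ws wz)).map (fun v => v n)
      = (((c + N : ℕ) : ℝ≥0∞))⁻¹ • ((c : ℝ≥0∞) • Measure.dirac u0
        + (N : ℝ≥0∞) • Measure.dirac (stepProf M N e ws wz n)) := by
    intro n
    rw [mixM, Measure.map_smul, Measure.map_add _ _ (measurable_pi_apply n),
      Measure.map_smul, Measure.map_smul, Measure.map_dirac' (measurable_pi_apply n),
      Measure.map_dirac' (measurable_pi_apply n)]
    rfl
  rw [avgMarginal, Finset.sum_congr rfl (fun n _ => hmap n), ← Finset.smul_sum,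
    Finset.sum_add_distrib, Finset.sum_const, ← Finset.smul_sum]
  have hsd : (∑ n : Fin N, Measure.dirac (stepProf M N e ws wz n))
      = ((e : ℝ≥0∞)) • Measure.dirac ws + (((N - e : ℕ) : ℝ≥0∞)) • Measure.dirac wz := by
    have : (∑ n : Fin N, Measure.dirac (stepProf M N e ws wz n))
        = ∑ n : Fin N, Measure.dirac (if (n : ℕ) < e then ws else wz) := rfl
    rw [this, sum_dirac_profile N e he ws wz]
  rw [hsd, Finset.card_univ, Fintype.card_fin, ← Nat.cast_smul_eq_nsmul ℝ≥0∞,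
    ← smul_add (N : ℝ≥0∞), smul_smul, smul_smul]
  congr 1
  rw [show ((N : ℝ≥0∞))⁻¹ * ((((c + N : ℕ) : ℝ≥0∞))⁻¹) * (N : ℝ≥0∞)
      = (((c + N : ℕ) : ℝ≥0∞))⁻¹ * (((N : ℝ≥0∞))⁻¹ * (N : ℝ≥0∞)) from by ring,
    ENNReal.inv_mul_cancel hN0 (ENNReal.natCast_ne_top _), mul_one]

lemma mix_integral (M N c : ℕ) (hN : 0 < N) (u0 : Valuation M)
    (vb : Fin N → Valuation M) (g : (Fin N → Valuation M) → ℝ) :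
    ∫ v, g v ∂(mixM M N c u0 vb)
      = ((((c + N : ℕ) : ℝ≥0∞))⁻¹ * c).toReal * g (constProf M N u0)
        + ((((c + N : ℕ) : ℝ≥0∞))⁻¹ * N).toReal * g vb := by
  have hs0 : ((c + N : ℕ) : ℝ≥0∞) ≠ 0 := mix_s_ne_zero hN
  have h1 : (((c + N : ℕ) : ℝ≥0∞))⁻¹ * c ≠ ⊤ :=
    ENNReal.mul_ne_top (ENNReal.inv_ne_top.2 hs0) (ENNReal.natCast_ne_top _)
  have h2 : (((c + N : ℕ) : ℝ≥0∞))⁻¹ * N ≠ ⊤ :=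
    ENNReal.mul_ne_top (ENNReal.inv_ne_top.2 hs0) (ENNReal.natCast_ne_top _)
  rw [mixM, smul_add, smul_smul, smul_smul]
  exact integral_two_point _ _ h1 h2 _ _ g

end Aux


/-- Proposition 3, tightness in `k`: with `v̄ = 1`, for every `M ≥ 1`, menu
`𝓜`, and `2 ≤ k ≤ N`, `N ≥ |𝓜| + 1`, there is a Borel probability measure `G` on
valuations such that, with `𝔾 = {G}` and `𝔽 = {F : F̄ = G}`,
`inf_{F∈𝔽} E_F[R^k_𝓜(v)] ≤ inf_{F∈𝔽} V_𝓜(F) − (k−1)/(2N)`. -/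
theorem rank_guarantee_tightness_in_k
    (M N : ℕ) (hM : 1 ≤ M)
    (Menu : Finset (Bundle M)) (hMenu : IsMenu M Menu)
    (hN : Menu.card + 1 ≤ N) (k : ℕ) (hk2 : 2 ≤ k) (hkN : k ≤ N) :
    ∃ G : Measure (Valuation M), ValOK M 1 G ∧
      sInf ((fun F => ∫ v, rankGuarantee M N Menu v k ∂F) ''
          {F : Measure (Fin N → Valuation M) |
            ProfileOK M N 1 F ∧ avgMarginal M N F = G}) ≤
        sInf ((fun F => Vsurplus M N Menu F) ''
          {F : Measure (Fin N → Valuation M) |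
            ProfileOK M N 1 F ∧ avgMarginal M N F = G})
          - ((k : ℝ) - 1) / (2 * (N : ℝ)) := by
  classical
  obtain ⟨hMne, hNoEmpty⟩ := hMenu
  obtain ⟨b₀, hb₀⟩ := hMne
  have hb₀ne : b₀.Nonempty :=
    Finset.nonempty_iff_ne_empty.2 (fun h => hNoEmpty (h ▸ hb₀))
  obtain ⟨i₀, hi₀⟩ := hb₀ne
  have hN0 : 0 < N := by omega
  set ws : Valuation M := fun b => if i₀ ∈ b then (1 : ℝ) else 0 with hws
  set wz : Valuation M := fun _ => (0 : ℝ) with hwz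
  have hVws : IsValuation M 1 ws := by
    constructor
    · simp [hws]
    · intro b; by_cases h : i₀ ∈ b <;> simp [hws, h]
  have hVwz : IsValuation M 1 wz := ⟨rfl, fun b => by norm_num [hwz]⟩
  set G : Measure (Valuation M) :=
    (2⁻¹ : ℝ≥0∞) • Measure.dirac ws + (2⁻¹ : ℝ≥0∞) • Measure.dirac wz with hG
  have hGOK : ValOK M 1 G := by
    constructor
    · constructor
      show G Set.univ = 1
      rw [hG, Measure.add_apply, Measure.smul_apply, Measure.smul_apply,
        Measure.dirac_apply_of_mem (Set.mem_univ _),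
        Measure.dirac_apply_of_mem (Set.mem_univ _)]
      simp [ENNReal.inv_two_add_inv_two]
    · rw [hG, Measure.add_apply, Measure.smul_apply, Measure.smul_apply,
        Measure.dirac_apply_of_mem (show ws ∈ {w | IsValuation M 1 w} from hVws),
        Measure.dirac_apply_of_mem (show wz ∈ {w | IsValuation M 1 w} from hVwz)]
      simp [ENNReal.inv_two_add_inv_two]
  have hvB : ∀ n, IsValuation M 1 (stepProf M N (k - 1) ws wz n) := by
    intro n
    rw [stepProf]
    split_ifs
    · exact hVws
    · exact hVwz
  -- rank guarantee values
  have hrankB : rankGuarantee M N Menu (stepProf M N (k - 1) ws wz) k = 0 := by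
    rw [rankGuarantee]
    apply maxAlloc_eq_zero
    intro b
    apply kthHighest_eq_zero k _ ?_ ?_ (by omega) hkN
    · intro n
      simp only [stepProf]
      split_ifs
      · by_cases hib : i₀ ∈ b <;> simp [hws, hib]
      · simp [hwz]
    · intro T hT
      by_contra hcon
      push_neg at hcon
      have hsub : T ⊆ Finset.univ.filter (fun n : Fin N => (n : ℕ) < k - 1) := by
        intro n hn
        simp only [Finset.mem_filter, Finset.mem_univ, true_and]
        by_contra hlt
        exact hcon n hn (by simp [stepProf, hlt, hwz])
      have hcard := Finset.card_le_card hsub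
      rw [card_filter_lt_fin N (k - 1) (by omega), hT] at hcard
      omega
  have hrankA_le : rankGuarantee M N Menu (constProf M N ws) k ≤ 1 := by
    rw [rankGuarantee]
    have hkth : (fun b : Bundle M => kthHighest N (fun n => constProf M N ws n b) k)
        = fun b => ws b := by
      funext b
      exact kthHighest_const k (by omega) hkN (ws b)
    rw [hkth]
    apply maxAlloc_le
    intro X hX
    have hsum : ∑ b ∈ X, ws b = ((X.filter fun b => i₀ ∈ b).card : ℝ) := by
      rw [hws]
      rw [Finset.sum_boole]
    have hcard : (X.filter fun b => i₀ ∈ b).card ≤ 1 := by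
      rw [Finset.card_le_one]
      intro a ha b hb
      simp only [Finset.mem_filter] at ha hb
      by_contra hne
      exact (Finset.disjoint_left.1 (hX.2 a ha.1 b hb.1 hne) ha.2) hb.2
    rw [hsum]
    exact_mod_cast hcard
  have hrankC : rankGuarantee M N Menu (constProf M N wz) k = 0 := by
    rw [rankGuarantee]
    apply maxAlloc_eq_zero
    intro b
    have hcz : (fun n : Fin N => constProf M N wz n b) = fun _ => (0 : ℝ) := by
      funext n; simp [constProf, hwz]
    rw [hcz, kthHighest_const k (by omega) hkN 0]
  -- the shared lower bound on the RHS
  have hhalf : ∀ F : Measure (Fin N → Valuation M),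
      ProfileOK M N 1 F → avgMarginal M N F = G → 1 / 2 ≤ Vsurplus M N Menu F := by
    intro F hPOK havg
    exact half_le_Vsurplus M N hN0 Menu hb₀ hi₀ F hPOK (by rw [havg, hG, hws, hwz])
  -- construct the worst-case F
  obtain ⟨F, hPOK, havg, hval⟩ : ∃ F : Measure (Fin N → Valuation M),
      ProfileOK M N 1 F ∧ avgMarginal M N F = G ∧
        ∫ v, rankGuarantee M N Menu v k ∂F ≤ 1 / 2 - ((k : ℝ) - 1) / (2 * (N : ℝ)) := by
    rcases le_or_gt (2 * k) (N + 2) with hcase | hcase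
    · -- many bidders: mixture of all-ws and step profile
      set c := N + 2 - 2 * k with hc
      refine ⟨mixM M N c ws (stepProf M N (k - 1) ws wz),
        mix_profileOK M N c hN0 ws _ hVws hvB, ?_, ?_⟩
      · rw [mix_avg M N c (k - 1) hN0 (by omega) ws ws wz, hG]
        have hd1 : ((c : ℝ≥0∞) • Measure.dirac ws + (((k - 1 : ℕ) : ℝ≥0∞) • Measure.dirac ws
            + (((N - (k - 1) : ℕ)) : ℝ≥0∞) • Measure.dirac wz))
            = ((N - (k - 1) : ℕ) : ℝ≥0∞) • Measure.dirac ws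
              + ((N - (k - 1) : ℕ) : ℝ≥0∞) • Measure.dirac wz := by
          rw [← add_assoc, ← add_smul, ← Nat.cast_add,
            show c + (k - 1) = N - (k - 1) from by omega]
        rw [hd1, smul_add, smul_smul, smul_smul]
        have hco : (((c + N : ℕ) : ℝ≥0∞))⁻¹ * ((N - (k - 1) : ℕ) : ℝ≥0∞) = 2⁻¹ := by
          rw [show (c + N : ℕ) = 2 * (N - (k - 1)) from by omega, Nat.cast_mul,
            ENNReal.mul_inv (Or.inl (by norm_num)) (Or.inl (by norm_num)), mul_assoc,
            ENNReal.inv_mul_cancel (Nat.cast_ne_zero.2 (by omega))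
              (ENNReal.natCast_ne_top _), mul_one]
          norm_num
        rw [hco]
      · rw [mix_integral M N c hN0 ws _ (fun v => rankGuarantee M N Menu v k), hrankB,
          mul_zero, add_zero]
        have ht0 : 0 ≤ ((((c + N : ℕ) : ℝ≥0∞))⁻¹ * (c : ℝ≥0∞)).toReal :=
          ENNReal.toReal_nonneg
        have hstep : ((((c + N : ℕ) : ℝ≥0∞))⁻¹ * (c : ℝ≥0∞)).toReal
              * rankGuarantee M N Menu (constProf M N ws) k
            ≤ ((((c + N : ℕ) : ℝ≥0∞))⁻¹ * (c : ℝ≥0∞)).toReal :=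
          mul_le_of_le_one_right ht0 hrankA_le
        refine hstep.trans ?_
        rw [ENNReal.toReal_mul, ENNReal.toReal_inv]
        simp only [ENNReal.toReal_natCast]
        have hkR : (2 : ℝ) ≤ k := by exact_mod_cast hk2
        have hkNR : (k : ℝ) ≤ N := by exact_mod_cast hkN
        have hcR : (c : ℝ) + 2 * k = (N : ℝ) + 2 := by exact_mod_cast (by omega : c + 2 * k = N + 2)
        have hcNR : ((c + N : ℕ) : ℝ) = (c : ℝ) + N := by push_cast; ring
        have hc0 : (0 : ℝ) ≤ c := Nat.cast_nonneg c
        have hden : (0 : ℝ) < (c : ℝ) + N := by linarith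
        have hNR : (0 : ℝ) < N := by linarith
        have hb : 1 / 2 - ((k : ℝ) - 1) / (2 * N) = ((N : ℝ) - k + 1) / (2 * N) := by
          field_simp
          ring
        rw [hcNR, hb, inv_mul_eq_div, div_le_div_iff₀ hden (by positivity)]
        nlinarith [sq_nonneg ((k : ℝ) - 1)]
    · -- few bidders: mixture of all-zero and step profile
      set c := 2 * k - 2 - N with hc
      refine ⟨mixM M N c wz (stepProf M N (k - 1) ws wz),
        mix_profileOK M N c hN0 wz _ hVwz hvB, ?_, ?_⟩
      · rw [mix_avg M N c (k - 1) hN0 (by omega) wz ws wz, hG]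
        have hd1 : ((c : ℝ≥0∞) • Measure.dirac wz + (((k - 1 : ℕ) : ℝ≥0∞) • Measure.dirac ws
            + (((N - (k - 1) : ℕ)) : ℝ≥0∞) • Measure.dirac wz))
            = ((k - 1 : ℕ) : ℝ≥0∞) • Measure.dirac ws
              + ((k - 1 : ℕ) : ℝ≥0∞) • Measure.dirac wz := by
          rw [add_left_comm, ← add_smul, ← Nat.cast_add,
            show c + (N - (k - 1)) = k - 1 from by omega]
        rw [hd1, smul_add, smul_smul, smul_smul]
        have hco : (((c + N : ℕ) : ℝ≥0∞))⁻¹ * ((k - 1 : ℕ) : ℝ≥0∞) = 2⁻¹ := by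
          rw [show (c + N : ℕ) = 2 * (k - 1) from by omega, Nat.cast_mul,
            ENNReal.mul_inv (Or.inl (by norm_num)) (Or.inl (by norm_num)), mul_assoc,
            ENNReal.inv_mul_cancel (Nat.cast_ne_zero.2 (by omega))
              (ENNReal.natCast_ne_top _), mul_one]
          norm_num
        rw [hco]
      · rw [mix_integral M N c hN0 wz _ (fun v => rankGuarantee M N Menu v k), hrankB,
          hrankC, mul_zero, mul_zero, add_zero]
        have hkR : (2 : ℝ) ≤ k := by exact_mod_cast hk2
        have hkNR : (k : ℝ) ≤ N := by exact_mod_cast hkN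
        have hNR : (0 : ℝ) < N := by linarith
        have : ((k : ℝ) - 1) / (2 * N) ≤ 1 / 2 := by
          rw [div_le_iff₀ (by positivity)]
          linarith
        linarith
  -- conclude
  refine ⟨G, hGOK, ?_⟩
  have hL : sInf ((fun F => ∫ v, rankGuarantee M N Menu v k ∂F) ''
      {F : Measure (Fin N → Valuation M) |
        ProfileOK M N 1 F ∧ avgMarginal M N F = G})
      ≤ ∫ v, rankGuarantee M N Menu v k ∂F := by
    apply csInf_le
    · refine ⟨0, ?_⟩
      rintro y ⟨F', _, rfl⟩
      exact integral_nonneg fun v => rankGuarantee_nonneg M N Menu v k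
    · exact ⟨F, ⟨hPOK, havg⟩, rfl⟩
  have hR : 1 / 2 ≤ sInf ((fun F => Vsurplus M N Menu F) ''
      {F : Measure (Fin N → Valuation M) |
        ProfileOK M N 1 F ∧ avgMarginal M N F = G}) := by
    refine le_csInf ⟨Vsurplus M N Menu F, ⟨F, ⟨hPOK, havg⟩, rfl⟩⟩ ?_
    rintro y ⟨F', ⟨h1, h2⟩, rfl⟩
    exact hhalf F' h1 h2
  linarith

end RankGuaranteedAuctions
end

section
/- (Sufficiency of the itemized menu under weak substitutability.) Let v be a valuation exhibiting weak substitutability, i.e., Σ_{s∈b} v({s}) ≥ v(b) for every bundle b. Then max_{X ∈ 𝓑(2^S)} Σ_{b∈X} v(b) = Σ_{s∈S} v({s}); in particular the maximum over all feasible allocations equals the maximum over feasible allocations consisting only of singleton bundles. -/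
open MeasureTheory
open scoped ENNReal BigOperators

namespace RankGuaranteedAuctions

/-- sufficiency of the itemized menu under weak substitutability: if
`∑_{s∈b} v({s}) ≥ v(b)` for every bundle `b`, then
`max_{X ∈ 𝓑(2^S)} ∑_{b∈X} v(b) = ∑_{s∈S} v({s})`; in particular, the maximum over all
feasible allocations equals the maximum over feasible allocations of singleton bundles. -/
theorem itemized_menu_sufficient_of_weak_substitutability
    (M : ℕ) (hM : 1 ≤ M) (vbar : ℝ) (hvbar : 0 ≤ vbar)
    (v : Valuation M) (hv : IsValuation M vbar v)
    (hsub : ∀ b : Bundle M, v b ≤ ∑ s ∈ b, v {s}) :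
    maxAlloc M (completeMenu M) v = ∑ s : Fin M, v {s} ∧
    maxAlloc M (completeMenu M) v =
      maxAlloc M (Finset.univ.image fun s : Fin M => ({s} : Bundle M)) v := by
  have hv0 : ∀ b : Bundle M, 0 ≤ v b := fun b => (hv.2 b).1
  -- upper bound for any feasible allocation
  have hub : ∀ X : Finset (Bundle M),
      (∀ b ∈ X, ∀ b' ∈ X, b ≠ b' → Disjoint b b') →
      ∑ b ∈ X, v b ≤ ∑ s : Fin M, v {s} := by
    intro X hdisj
    calc ∑ b ∈ X, v b ≤ ∑ b ∈ X, ∑ s ∈ b, v {s} :=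
          Finset.sum_le_sum fun b _ => hsub b
      _ = ∑ s ∈ X.biUnion id, v {s} :=
          (Finset.sum_biUnion (fun b hb b' hb' hne => hdisj b hb b' hb' hne)).symm
      _ ≤ ∑ s : Fin M, v {s} :=
          Finset.sum_le_sum_of_subset_of_nonneg (Finset.subset_univ _)
            (fun s _ _ => hv0 {s})
  -- the all-singletons allocation
  set X₀ : Finset (Bundle M) := Finset.univ.image fun s : Fin M => ({s} : Bundle M) with hX₀
  have hsinj : Function.Injective (fun s : Fin M => ({s} : Bundle M)) := by
    intro a b h
    simpa using h
  have hX₀sum : ∑ b ∈ X₀, v b = ∑ s : Fin M, v {s} := by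
    rw [hX₀, Finset.sum_image (fun a _ b _ h => hsinj h)]
  have hX₀disj : ∀ b ∈ X₀, ∀ b' ∈ X₀, b ≠ b' → Disjoint b b' := by
    intro b hb b' hb' hne
    simp only [hX₀, Finset.mem_image, Finset.mem_univ, true_and] at hb hb'
    obtain ⟨s, rfl⟩ := hb
    obtain ⟨s', rfl⟩ := hb'
    have : s ≠ s' := fun h => hne (by rw [h])
    simp [Finset.disjoint_singleton, this, this.symm]
  have hX₀mem : ∀ b ∈ X₀, b ∈ completeMenu M := by
    intro b hb
    simp only [hX₀, Finset.mem_image, Finset.mem_univ, true_and] at hb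
    obtain ⟨s, rfl⟩ := hb
    simp [completeMenu, Finset.singleton_ne_empty]
  have hbdd : ∀ (Menu : Finset (Bundle M)),
      BddAbove {y : ℝ | ∃ X : Finset (Bundle M), Feasible M Menu X ∧ y = ∑ b ∈ X, v b} := by
    intro Menu
    exact ⟨∑ s : Fin M, v {s}, fun y ⟨X, hX, hy⟩ => hy ▸ hub X hX.2⟩
  have key : ∀ (Menu : Finset (Bundle M)), X₀ ⊆ Menu →
      maxAlloc M Menu v = ∑ s : Fin M, v {s} := by
    intro Menu hsub'
    apply le_antisymm
    · apply Real.sSup_le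
      · rintro y ⟨X, hX, rfl⟩
        exact hub X hX.2
      · calc (0:ℝ) ≤ ∑ b ∈ X₀, v b := Finset.sum_nonneg fun b _ => hv0 b
          _ = ∑ s : Fin M, v {s} := hX₀sum
    · exact hX₀sum ▸ le_csSup (hbdd Menu) ⟨X₀, ⟨hsub', hX₀disj⟩, rfl⟩
  have h1 : maxAlloc M (completeMenu M) v = ∑ s : Fin M, v {s} :=
    key _ hX₀mem
  have h2 : maxAlloc M X₀ v = ∑ s : Fin M, v {s} :=
    key _ (le_refl X₀)
  exact ⟨h1, h1.trans h2.symm⟩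

end RankGuaranteedAuctions
end

section
/- (Proposition 5, sufficiency of the partitional menu.) Let 𝒦 be a partition of S into nonempty blocks, and let v be a valuation exhibiting 𝒦-partitioned complementarity: (i) for every block b ∈ 𝒦 and every partition κ of b into nonempty subsets, Σ_{b'∈κ} v(b') ≤ v(b); and (ii) for every bundle b' ⊆ S, Σ_{b∈𝒦} v(b ∩ b') ≥ v(b'). Then max_{X ∈ 𝓑(2^S)} Σ_{b∈X} v(b) = Σ_{b∈𝒦} v(b) = max_{X ∈ 𝓑(𝒦)} Σ_{b∈X} v(b). -/
open MeasureTheory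
open scoped ENNReal BigOperators

namespace RankGuaranteedAuctions

/-- Per-block bound: for a block `b ∈ K` and a pairwise-disjoint family `X`,
the sum of values of intersections with `b` is at most `v b`. -/
lemma block_bound (M : ℕ) (vbar : ℝ) (v : Valuation M) (hv : IsValuation M vbar v)
    (K : Finset (Bundle M)) (hKne : ∀ c ∈ K, c ≠ ∅)
    (hwithin : ∀ b ∈ K, ∀ κ : Finset (Bundle M), IsPartitionOf M κ b →
      ∑ c ∈ κ, v c ≤ v b)
    (b : Bundle M) (hb : b ∈ K)
    (X : Finset (Bundle M))
    (hX : ∀ c ∈ X, ∀ c' ∈ X, c ≠ c' → Disjoint c c') :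
    ∑ b' ∈ X, v (b ∩ b') ≤ v b := by
  classical
  set X' : Finset (Bundle M) := X.filter (fun b' => b ∩ b' ≠ ∅) with hX'def
  have hsum1 : ∑ b' ∈ X, v (b ∩ b') = ∑ b' ∈ X', v (b ∩ b') := by
    rw [hX'def]
    refine (Finset.sum_filter_of_ne ?_).symm
    intro b' _ hne
    intro h
    exact hne (by rw [h, hv.1])
  have hinj : Set.InjOn (fun b' => b ∩ b') ↑X' := by
    intro c hc c' hc' heq
    dsimp only at heq
    simp only [hX'def, Finset.coe_filter, Set.mem_setOf_eq] at hc hc'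
    by_contra hne
    have hd := hX c hc.1 c' hc'.1 hne
    have : b ∩ c ⊆ c ⊓ c' := by
      intro x hx
      simp only [Finset.mem_inter] at hx
      have hx' : x ∈ b ∩ c' := by rw [← heq]; exact Finset.mem_inter.mpr hx
      exact Finset.mem_inter.mpr ⟨hx.2, (Finset.mem_inter.mp hx').2⟩
    rw [Finset.disjoint_iff_inter_eq_empty] at hd
    exact hc.2 (Finset.subset_empty.mp (hd ▸ this))
  set κ₀ : Finset (Bundle M) := X'.image (fun b' => b ∩ b') with hκ₀def
  have hsum2 : ∑ b' ∈ X', v (b ∩ b') = ∑ c ∈ κ₀, v c := by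
    rw [hκ₀def, Finset.sum_image (fun c hc c' hc' h => hinj hc hc' h)]
  have hκ₀ne : ∀ c ∈ κ₀, c ≠ ∅ := by
    intro c hc
    simp only [hκ₀def, Finset.mem_image, hX'def, Finset.mem_filter] at hc
    obtain ⟨b', ⟨_, hne⟩, rfl⟩ := hc
    exact hne
  have hκ₀sub : ∀ c ∈ κ₀, c ⊆ b := by
    intro c hc
    simp only [hκ₀def, Finset.mem_image] at hc
    obtain ⟨b', _, rfl⟩ := hc
    exact Finset.inter_subset_left
  have hκ₀disj : ∀ c ∈ κ₀, ∀ c' ∈ κ₀, c ≠ c' → Disjoint c c' := by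
    intro c hc c' hc' hne
    simp only [hκ₀def, Finset.mem_image] at hc hc'
    obtain ⟨d, hd, rfl⟩ := hc
    obtain ⟨d', hd', rfl⟩ := hc'
    have hdd' : d ≠ d' := fun h => hne (by rw [h])
    simp only [hX'def, Finset.mem_filter] at hd hd'
    exact Disjoint.mono Finset.inter_subset_right Finset.inter_subset_right
      (hX d hd.1 d' hd'.1 hdd')
  set s : Bundle M := κ₀.sup id with hsdef
  have hsb : s ⊆ b := Finset.sup_le (fun c hc => hκ₀sub c hc)
  set r : Bundle M := b \ s with hrdef
  by_cases hr : r = ∅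
  · -- κ₀ is a partition of b
    have hsup : κ₀.sup id = b := by
      apply Finset.Subset.antisymm hsb
      intro x hx
      by_contra hxs
      have : x ∈ r := Finset.mem_sdiff.mpr ⟨hx, hxs⟩
      rw [hr] at this
      exact absurd this (Finset.notMem_empty x)
    have := hwithin b hb κ₀ ⟨hκ₀ne, hκ₀disj, hsup⟩
    linarith [hsum1, hsum2]
  · -- add the remainder r
    have hrκ₀ : r ∉ κ₀ := by
      intro hmem
      have hrs : r ⊆ s := Finset.le_sup (f := id) hmem
      have : Disjoint r s := Finset.sdiff_disjoint
      rw [Finset.disjoint_iff_inter_eq_empty] at this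
      exact hr (Finset.subset_empty.mp (this ▸ Finset.subset_inter (Finset.Subset.refl r) hrs))
    have hpart : IsPartitionOf M (insert r κ₀) b := by
      refine ⟨?_, ?_, ?_⟩
      · intro c hc
        rcases Finset.mem_insert.mp hc with rfl | hc
        · exact hr
        · exact hκ₀ne c hc
      · intro c hc c' hc' hne
        rcases Finset.mem_insert.mp hc with rfl | hc <;>
          rcases Finset.mem_insert.mp hc' with rfl | hc'
        · exact absurd rfl hne
        · exact Disjoint.mono_right (Finset.le_sup (f := id) hc') Finset.sdiff_disjoint
        · exact (Disjoint.mono_right (Finset.le_sup (f := id) hc) Finset.sdiff_disjoint).symm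
        · exact hκ₀disj c hc c' hc' hne
      · rw [Finset.sup_insert]
        show r ⊔ s = b
        rw [hrdef, Finset.sup_eq_union]
        exact Finset.sdiff_union_of_subset hsb
    have hle := hwithin b hb (insert r κ₀) hpart
    rw [Finset.sum_insert hrκ₀] at hle
    have hr0 : 0 ≤ v r := (hv.2 r).1
    linarith [hsum1, hsum2]

/-- Any pairwise-disjoint family has total value at most `∑ b ∈ K, v b`. -/
lemma alloc_bound (M : ℕ) (vbar : ℝ) (v : Valuation M) (hv : IsValuation M vbar v)
    (K : Finset (Bundle M)) (hKne : ∀ c ∈ K, c ≠ ∅)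
    (hwithin : ∀ b ∈ K, ∀ κ : Finset (Bundle M), IsPartitionOf M κ b →
      ∑ c ∈ κ, v c ≤ v b)
    (hacross : ∀ b' : Bundle M, v b' ≤ ∑ b ∈ K, v (b ∩ b'))
    (X : Finset (Bundle M))
    (hX : ∀ c ∈ X, ∀ c' ∈ X, c ≠ c' → Disjoint c c') :
    ∑ b' ∈ X, v b' ≤ ∑ b ∈ K, v b := by
  calc ∑ b' ∈ X, v b' ≤ ∑ b' ∈ X, ∑ b ∈ K, v (b ∩ b') :=
        Finset.sum_le_sum (fun b' _ => hacross b')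
    _ = ∑ b ∈ K, ∑ b' ∈ X, v (b ∩ b') := Finset.sum_comm
    _ ≤ ∑ b ∈ K, v b := Finset.sum_le_sum
        (fun b hb => block_bound M vbar v hv K hKne hwithin b hb X hX)

/-- Proposition 5, sufficiency of the partitional menu: if `𝒦` is a
partition of `S` into nonempty blocks and `v` exhibits `𝒦`-partitioned complementarity,
then `max_{X ∈ 𝓑(2^S)} ∑_{b∈X} v(b) = ∑_{b∈𝒦} v(b) = max_{X ∈ 𝓑(𝒦)} ∑_{b∈X} v(b)`. -/
theorem partitional_menu_sufficient_of_partitioned_complementarity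
    (M : ℕ) (hM : 1 ≤ M) (vbar : ℝ) (hvbar : 0 ≤ vbar)
    (v : Valuation M) (hv : IsValuation M vbar v)
    (K : Finset (Bundle M)) (hK : IsPartitionOf M K Finset.univ)
    (hwithin : ∀ b ∈ K, ∀ κ : Finset (Bundle M), IsPartitionOf M κ b →
      ∑ c ∈ κ, v c ≤ v b)
    (hacross : ∀ b' : Bundle M, v b' ≤ ∑ b ∈ K, v (b ∩ b')) :
    maxAlloc M (completeMenu M) v = ∑ b ∈ K, v b ∧
    (∑ b ∈ K, v b) = maxAlloc M K v := by
  obtain ⟨hKne, hKdisj, hKsup⟩ := hK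
  have hub : ∀ (Menu : Finset (Bundle M)),
      ∀ y ∈ {y : ℝ | ∃ X : Finset (Bundle M), Feasible M Menu X ∧ y = ∑ b ∈ X, v b},
      y ≤ ∑ b ∈ K, v b := by
    rintro Menu y ⟨X, ⟨_, hXd⟩, rfl⟩
    exact alloc_bound M vbar v hv K hKne hwithin hacross X hXd
  have hmemC : (∑ b ∈ K, v b) ∈
      {y : ℝ | ∃ X : Finset (Bundle M), Feasible M (completeMenu M) X ∧ y = ∑ b ∈ X, v b} := by
    refine ⟨K, ⟨?_, hKdisj⟩, rfl⟩
    intro b hb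
    exact Finset.mem_erase.mpr ⟨hKne b hb, Finset.mem_univ b⟩
  have hmemK : (∑ b ∈ K, v b) ∈
      {y : ℝ | ∃ X : Finset (Bundle M), Feasible M K X ∧ y = ∑ b ∈ X, v b} :=
    ⟨K, ⟨Finset.Subset.refl K, hKdisj⟩, rfl⟩
  constructor
  · exact le_antisymm
      (csSup_le ⟨_, hmemC⟩ (hub (completeMenu M)))
      (le_csSup ⟨∑ b ∈ K, v b, hub (completeMenu M)⟩ hmemC)
  · exact le_antisymm
      (le_csSup ⟨∑ b ∈ K, v b, hub K⟩ hmemK)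
      (csSup_le ⟨_, hmemK⟩ (hub K))

end RankGuaranteedAuctions
end

section
/- (Sufficiency of the quantity menu for homogeneous goods.) Suppose goods are homogeneous: there is u : {0,1,…,M} → ℝ with u(0) = 0 and u(l) ∈ [0, v̄] such that v(b) = u(|b|) for every bundle b. For homogeneous goods a feasible allocation from a menu 𝓜 is a subset X ⊆ 𝓜 with Σ_{b∈X} |b| ≤ M, and 𝓑'(𝓜) denotes the set of such allocations. Let 𝓜₀ be any menu that contains, for each l ∈ {1,…,M}, exactly ⌊M/l⌋ pairwise distinct bundles of size l. Then max_{X ∈ 𝓑'(𝓜₀)} Σ_{b∈X} v(b) = max_{X ∈ 𝓑'(2^S)} Σ_{b∈X} v(b). -/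
open MeasureTheory
open scoped ENNReal BigOperators

namespace RankGuaranteedAuctions

/-- sufficiency of the quantity menu for homogeneous goods: if `v(b) = u(|b|)`
and the menu `𝓜₀` contains, for each `l ∈ {1,…,M}`, exactly `⌊M/l⌋` distinct bundles of
size `l`, then the maximum over homogeneous-goods-feasible allocations from `𝓜₀` equals
the maximum over homogeneous-goods-feasible allocations from the complete menu. -/
theorem quantity_menu_sufficient_of_homogeneous_goods
    (M : ℕ) (hM : 1 ≤ M) (vbar : ℝ) (hvbar : 0 ≤ vbar)
    (u : ℕ → ℝ) (hu0 : u 0 = 0) (hu : ∀ l ≤ M, 0 ≤ u l ∧ u l ≤ vbar)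
    (v : Valuation M) (hhom : ∀ b : Bundle M, v b = u b.card)
    (Menu₀ : Finset (Bundle M)) (hMenu₀ : IsMenu M Menu₀)
    (hcount : ∀ l ∈ Finset.Icc 1 M,
      (Menu₀.filter fun b : Bundle M => b.card = l).card = M / l) :
    maxAllocQ M Menu₀ v = maxAllocQ M (completeMenu M) v := by
  have hsub : Menu₀ ⊆ completeMenu M := by
    intro b hb
    simp only [completeMenu, Finset.mem_erase, Finset.mem_univ, and_true]
    rintro rfl; exact hMenu₀.2 hb
  unfold maxAllocQ
  congr 1
  ext y
  constructor
  · rintro ⟨X, ⟨hXsub, hXsum⟩, rfl⟩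
    exact ⟨X, ⟨hXsub.trans hsub, hXsum⟩, rfl⟩
  · rintro ⟨X, ⟨hXsub, hXsum⟩, rfl⟩
    have hmap : ∀ b ∈ X, b.card ∈ Finset.Icc 1 M := by
      intro b hb
      have hbne : b ≠ ∅ := by
        have := hXsub hb
        simp only [completeMenu, Finset.mem_erase] at this
        exact this.1
      rw [Finset.mem_Icc]
      refine ⟨Finset.card_pos.mpr (Finset.nonempty_iff_ne_empty.mpr hbne), ?_⟩
      simpa using Finset.card_le_card (Finset.subset_univ b)
    set n : ℕ → ℕ := fun l => (X.filter fun b => b.card = l).card with hn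
    have hnl : ∀ l ∈ Finset.Icc 1 M, n l ≤ M / l := by
      intro l hl
      have h1 : n l * l ≤ ∑ b ∈ X, b.card := by
        calc n l * l = ∑ b ∈ X.filter (fun b => b.card = l), b.card := by
              rw [Finset.sum_congr rfl (fun b hb => (Finset.mem_filter.mp hb).2)]
              simp [hn, mul_comm]
          _ ≤ ∑ b ∈ X, b.card :=
              Finset.sum_le_sum_of_subset (Finset.filter_subset _ _)
      have hlpos : 0 < l := (Finset.mem_Icc.mp hl).1
      exact (Nat.le_div_iff_mul_le hlpos).mpr (h1.trans hXsum)
    have hchoose : ∀ l : ℕ, ∃ T : Finset (Bundle M),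
        T ⊆ Menu₀.filter (fun b => b.card = l) ∧
        (l ∈ Finset.Icc 1 M → T.card = n l) := by
      intro l
      by_cases hl : l ∈ Finset.Icc 1 M
      · obtain ⟨T, hT1, hT2⟩ := Finset.exists_subset_card_eq
          (show n l ≤ (Menu₀.filter (fun b => b.card = l)).card
            by rw [hcount l hl]; exact hnl l hl)
        exact ⟨T, hT1, fun _ => hT2⟩
      · exact ⟨∅, by simp, fun h => absurd h hl⟩
    choose T hTsub hTcard using hchoose
    have hTcardeq : ∀ l ∈ Finset.Icc 1 M, ∀ b ∈ T l, b.card = l := by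
      intro l _ b hb
      exact (Finset.mem_filter.mp (hTsub l hb)).2
    have hdisj : (↑(Finset.Icc 1 M) : Set ℕ).PairwiseDisjoint T := by
      intro l hl l' hl' hne
      simp only [Finset.disjoint_left]
      intro b hb hb'
      exact hne ((hTcardeq l hl b hb).symm.trans (hTcardeq l' hl' b hb'))
    refine ⟨(Finset.Icc 1 M).biUnion T, ⟨?_, ?_⟩, ?_⟩
    · intro b hb
      obtain ⟨l, _, hbl⟩ := Finset.mem_biUnion.mp hb
      exact (Finset.mem_filter.mp (hTsub l hbl)).1
    · rw [Finset.sum_biUnion hdisj]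
      have : ∀ l ∈ Finset.Icc 1 M, ∑ b ∈ T l, b.card = n l * l := by
        intro l hl
        rw [Finset.sum_congr rfl (hTcardeq l hl), Finset.sum_const,
          hTcard l hl, smul_eq_mul]
      rw [Finset.sum_congr rfl this]
      have hX : ∑ b ∈ X, b.card = ∑ l ∈ Finset.Icc 1 M, n l * l := by
        rw [← Finset.sum_fiberwise_of_maps_to hmap (fun b => b.card)]
        refine Finset.sum_congr rfl (fun l hl => ?_)
        rw [Finset.sum_congr rfl (fun b hb => (Finset.mem_filter.mp hb).2),
          Finset.sum_const, smul_eq_mul]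
      rw [← hX]; exact hXsum
    · rw [Finset.sum_biUnion hdisj]
      have h1 : ∀ l ∈ Finset.Icc 1 M, ∑ b ∈ T l, v b = (n l : ℝ) * u l := by
        intro l hl
        rw [Finset.sum_congr rfl (fun b hb => by
          rw [hhom b, hTcardeq l hl b hb]), Finset.sum_const,
          hTcard l hl, nsmul_eq_mul]
      have h2 : ∑ b ∈ X, v b = ∑ l ∈ Finset.Icc 1 M, (n l : ℝ) * u l := by
        rw [← Finset.sum_fiberwise_of_maps_to hmap (fun b => v b)]
        refine Finset.sum_congr rfl (fun l hl => ?_)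
        rw [Finset.sum_congr rfl (fun b hb => by
          rw [hhom b, (Finset.mem_filter.mp hb).2]), Finset.sum_const,
          nsmul_eq_mul]
      rw [Finset.sum_congr rfl h1, h2]

end RankGuaranteedAuctions
end

section
/- (Proposition 4, rank guarantee of the Vickrey auction.) Let v = (v¹,…,vᴺ) be a valuation profile with N ≥ M + 1, and suppose each bidder's valuation exhibits weak substitutability: Σ_{s∈b} vⁿ({s}) ≥ vⁿ(b) for every bundle b and bidder n. Then there exists an efficient assignment b* with ∪ₙ b*ₙ = S, and for every efficient assignment b* that allocates all items (∪ₙ b*ₙ = S), the VCG revenue satisfies R_VCG(v; b*) ≥ Σ_{o∈S} v^{(M+1)}_{{o}}, where v^{(M+1)}_{{o}} is the (M+1)-th highest value among v¹({o}),…,vᴺ({o}); equivalently, R_VCG(v; b*) ≥ R^{M+1}_{𝓜_S}(v) where 𝓜_S is the menu of all singleton bundles. -/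
open MeasureTheory
open scoped ENNReal BigOperators

namespace RankGuaranteedAuctions

lemma kthHighest_exists {N k : ℕ} (w : Fin N → ℝ) (hk : k ≤ N) :
    ∃ T : Finset (Fin N), T.card = k ∧ kthHighest N w k = sInf (w '' (T : Set (Fin N))) ∧
      ∀ t ∈ T, kthHighest N w k ≤ w t := by
  classical
  set K := {x : ℝ | ∃ T : Finset (Fin N), T.card = k ∧ x = sInf (w '' (T : Set (Fin N)))} with hK
  have hKfin : K.Finite := by
    apply Set.Finite.subset
      (Set.finite_range (fun T : Finset (Fin N) => sInf (w '' (T : Set (Fin N)))))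
    rintro x ⟨T, _, rfl⟩
    exact ⟨T, rfl⟩
  have hKne : K.Nonempty := by
    obtain ⟨T, _, hTc⟩ := Finset.exists_subset_card_eq
      (show k ≤ (Finset.univ : Finset (Fin N)).card by simpa using hk)
    exact ⟨_, T, hTc, rfl⟩
  have hmem : sSup K ∈ K := hKne.csSup_mem hKfin
  obtain ⟨T, hTc, hTeq⟩ := hmem
  refine ⟨T, hTc, hTeq, fun t ht => ?_⟩
  rw [show kthHighest N w k = sSup K from rfl, hTeq]
  exact csInf_le ((T.finite_toSet.image w).bddBelow) ⟨t, ht, rfl⟩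

lemma kthHighest_nonneg {N k : ℕ} (w : Fin N → ℝ) (hw : ∀ n, 0 ≤ w n)
    (hk : k ≤ N) (hk0 : 0 < k) : 0 ≤ kthHighest N w k := by
  obtain ⟨T, hTc, hTeq, _⟩ := kthHighest_exists w hk
  have hTne : T.Nonempty := Finset.card_pos.mp (by omega)
  rw [hTeq]
  refine le_csInf (hTne.to_set.image w) ?_
  rintro x ⟨t, _, rfl⟩
  exact hw t

lemma kth_select {N k : ℕ} (w : Fin N → ℝ) (hk : k ≤ N)
    (B : Finset (Fin N)) (hB : B.card < k) :
    ∃ t, t ∉ B ∧ kthHighest N w k ≤ w t := by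
  obtain ⟨T, hTc, _, hT⟩ := kthHighest_exists w hk
  have hns : ¬ T ⊆ B := fun hsub => by
    have := Finset.card_le_card hsub; omega
  obtain ⟨t, ht, htB⟩ := Finset.not_subset.mp hns
  exact ⟨t, htB, hT t ht⟩


/-- Proposition 4, rank guarantee of the Vickrey auction: with `N ≥ M + 1`
and weakly substitutable bidder valuations, there exists an efficient assignment
allocating all items, and for every such efficient assignment the VCG revenue is at least
`∑_{o∈S} v^{(M+1)}_{{o}}`, equivalently at least `R^{M+1}_{𝓜_S}(v)` for the menu `𝓜_S` of
all singleton bundles. -/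
theorem vcg_rank_guarantee_of_weak_substitutability
    (M N : ℕ) (hM : 1 ≤ M) (vbar : ℝ) (hvbar : 0 ≤ vbar) (hN : M + 1 ≤ N)
    (v : Fin N → Valuation M) (hv : ∀ n, IsValuation M vbar (v n))
    (hsub : ∀ n : Fin N, ∀ b : Bundle M, v n b ≤ ∑ s ∈ b, v n {s}) :
    (∃ a : Fin N → Bundle M, IsEfficient M N v a ∧ ∀ s : Fin M, ∃ n, s ∈ a n) ∧
    ∀ a : Fin N → Bundle M, IsEfficient M N v a → (∀ s : Fin M, ∃ n, s ∈ a n) →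
      vcgRevenue M N v a ≥ ∑ s : Fin M, kthHighest N (fun n => v n {s}) (M + 1) ∧
      vcgRevenue M N v a ≥
        rankGuarantee M N (Finset.univ.image fun s : Fin M => ({s} : Bundle M)) v
          (M + 1) := by
  classical
  have hv0 : ∀ n b, 0 ≤ v n b := fun n b => ((hv n).2 b).1
  have hvE : ∀ n, v n ∅ = 0 := fun n => (hv n).1
  have hMN : M + 1 ≤ N := hN
  have hsumcard : ∀ a : Fin N → Bundle M, IsAssignment M N a → ∑ t, (a t).card ≤ M := by
    intro a ha
    have h1 : (Finset.univ.biUnion a).card = ∑ t, (a t).card :=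
      Finset.card_biUnion (fun x _ y _ hxy => ha x y hxy)
    rw [← h1]
    calc (Finset.univ.biUnion a).card ≤ Fintype.card (Fin M) := Finset.card_le_univ _
      _ = M := Fintype.card_fin M
  have hempty : ∀ a : Fin N → Bundle M, IsAssignment M N a → ∃ n0, a n0 = ∅ := by
    intro a ha
    by_contra h
    push_neg at h
    have h2 : N ≤ ∑ t, (a t).card := by
      calc N = ∑ _t : Fin N, 1 := by simp
        _ ≤ _ := Finset.sum_le_sum (fun t _ =>
            Finset.card_pos.mpr (h t))
    have := hsumcard a ha
    omega
  have hHcard : ∀ (a : Fin N → Bundle M), IsAssignment M N a → ∀ n : Fin N,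
      (Finset.univ.filter fun t => t ≠ n ∧ a t ≠ ∅).card + (a n).card ≤ M := by
    intro a ha n
    set H := Finset.univ.filter fun t => t ≠ n ∧ a t ≠ ∅ with hH
    have hnH : n ∉ H := by simp [hH]
    have h1 : H.card ≤ ∑ t ∈ H, (a t).card := by
      calc H.card = ∑ _t ∈ H, 1 := by simp
        _ ≤ _ := Finset.sum_le_sum (fun t ht => by
            rw [hH, Finset.mem_filter] at ht
            exact Finset.card_pos.mpr (Finset.nonempty_iff_ne_empty.mpr ht.2.2))
    have h2 : ∑ t ∈ H, (a t).card + (a n).card = ∑ t ∈ insert n H, (a t).card := by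
      rw [Finset.sum_insert hnH]; ring
    have h3 : ∑ t ∈ insert n H, (a t).card ≤ ∑ t, (a t).card :=
      Finset.sum_le_sum_of_subset (Finset.subset_univ _)
    have h4 := hsumcard a ha
    omega
  have greedy : ∀ (a : Fin N → Bundle M), IsAssignment M N a → ∀ n : Fin N,
      ∀ c : Finset (Fin M), c ⊆ a n → ∃ g : Fin M → Fin N,
        Set.InjOn g ↑c ∧ ∀ s ∈ c, g s ≠ n ∧ a (g s) = ∅ ∧
          kthHighest N (fun m => v m {s}) (M+1) ≤ v (g s) {s} := by
    intro a ha n c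
    induction c using Finset.induction_on with
    | empty => exact fun _ => ⟨fun _ => n, by simp, by simp⟩
    | @insert s c hs ih =>
      intro hsub2
      obtain ⟨g, hginj, hg⟩ := ih ((Finset.subset_insert _ _).trans hsub2)
      set B := insert n ((Finset.univ.filter fun t => t ≠ n ∧ a t ≠ ∅) ∪ c.image g) with hB
      have hBcard : B.card < M + 1 := by
        have h1 : B.card ≤ ((Finset.univ.filter fun t => t ≠ n ∧ a t ≠ ∅) ∪ c.image g).card + 1 :=
          Finset.card_insert_le _ _
        have h2 : ((Finset.univ.filter fun t => t ≠ n ∧ a t ≠ ∅) ∪ c.image g).card ≤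
            (Finset.univ.filter fun t => t ≠ n ∧ a t ≠ ∅).card + (c.image g).card :=
          Finset.card_union_le _ _
        have h3 : (c.image g).card ≤ c.card := Finset.card_image_le
        have h4 : c.card + 1 ≤ (a n).card := by
          have := Finset.card_le_card hsub2
          rwa [Finset.card_insert_of_notMem hs] at this
        have h5 := hHcard a ha n
        omega
      obtain ⟨t, htB, htv⟩ := kth_select (fun m => v m {s}) hMN B hBcard
      have htn : t ≠ n := fun h => htB (by rw [hB, h]; exact Finset.mem_insert_self _ _)
      have htfree : a t = ∅ := by
        by_contra hat
        exact htB (by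
          rw [hB]
          exact Finset.mem_insert_of_mem (Finset.mem_union_left _
            (Finset.mem_filter.mpr ⟨Finset.mem_univ _, htn, hat⟩)))
      have htimg : t ∉ c.image g := fun h =>
        htB (by rw [hB]; exact Finset.mem_insert_of_mem (Finset.mem_union_right _ h))
      refine ⟨Function.update g s t, ?_, ?_⟩
      · intro x hx y hy hxy
        simp only [Finset.coe_insert, Set.mem_insert_iff, Finset.mem_coe] at hx hy
        rcases hx with rfl | hx <;> rcases hy with rfl | hy
        · rfl
        · exfalso
          rw [Function.update_self, Function.update_of_ne (fun h : y = x => hs (h ▸ hy))] at hxy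
          exact htimg (Finset.mem_image.mpr ⟨y, hy, hxy.symm⟩)
        · exfalso
          rw [Function.update_self, Function.update_of_ne (fun h : x = y => hs (h ▸ hx))] at hxy
          exact htimg (Finset.mem_image.mpr ⟨x, hx, hxy⟩)
        · rw [Function.update_of_ne (fun h : x = s => hs (h ▸ hx)),
            Function.update_of_ne (fun h : y = s => hs (h ▸ hy))] at hxy
          exact hginj hx hy hxy
      · intro s' hs'
        rcases Finset.mem_insert.mp hs' with rfl | hs'c
        · rw [Function.update_self]
          exact ⟨htn, htfree, htv⟩
        · rw [Function.update_of_ne (fun h : s' = s => hs (h ▸ hs'c))]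
          exact hg s' hs'c
  have keybound : ∀ a : Fin N → Bundle M, IsAssignment M N a → ∀ n : Fin N,
      ∑ s ∈ a n, kthHighest N (fun m => v m {s}) (M+1) ≤
        sSup {y : ℝ | ∃ a' : Fin N → Bundle M, IsAssignment M N a' ∧ a' n = ∅ ∧
            y = ∑ n' ∈ Finset.univ.erase n, v n' (a' n')}
          - ∑ n' ∈ Finset.univ.erase n, v n' (a n') := by
    intro a ha n
    obtain ⟨g, hginj, hg⟩ := greedy a ha n (a n) (subset_refl _)
    set a2 : Fin N → Bundle M := fun t =>
      if t = n then ∅ else if a t = ∅ then (a n).filter (fun s => g s = t) else a t with ha2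
    have ha2n : a2 n = ∅ := by simp [ha2]
    have ha2assign : IsAssignment M N a2 := by
      intro x y hxy
      rcases eq_or_ne x n with rfl | hx
      · rw [ha2n]; exact Finset.disjoint_empty_left _
      rcases eq_or_ne y n with rfl | hy
      · rw [ha2n]; exact Finset.disjoint_empty_right _
      by_cases hax : a x = ∅ <;> by_cases hay : a y = ∅
      · simp only [ha2, if_neg hx, if_neg hy, if_pos hax, if_pos hay]
        rw [Finset.disjoint_left]
        intro s hsx hsy
        rw [Finset.mem_filter] at hsx hsy
        exact hxy (hsx.2 ▸ hsy.2 ▸ rfl)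
      · simp only [ha2, if_neg hx, if_neg hy, if_pos hax, if_neg hay]
        exact Finset.disjoint_of_subset_left (Finset.filter_subset _ _)
          (ha n y (fun h => hy h.symm))
      · simp only [ha2, if_neg hx, if_neg hy, if_neg hax, if_pos hay]
        exact Finset.disjoint_of_subset_right (Finset.filter_subset _ _)
          (ha x n hx)
      · simp only [ha2, if_neg hx, if_neg hy, if_neg hax, if_neg hay]
        exact ha x y hxy
    have himg : ∀ s ∈ a n, a2 (g s) = {s} := by
      intro s hsan
      obtain ⟨h1, h2, _⟩ := hg s hsan
      simp only [ha2, if_neg h1, if_pos h2]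
      ext s'
      simp only [Finset.mem_filter, Finset.mem_singleton]
      constructor
      · rintro ⟨hs', hgs'⟩
        exact hginj hs' hsan hgs'
      · rintro rfl
        exact ⟨hsan, rfl⟩
    have himgsub : (a n).image g ⊆ Finset.univ.erase n := by
      intro t ht
      obtain ⟨s, hsan, rfl⟩ := Finset.mem_image.mp ht
      exact Finset.mem_erase.mpr ⟨(hg s hsan).1, Finset.mem_univ _⟩
    have hzero : ∀ t ∈ Finset.univ.erase n, t ∉ (a n).image g →
        v t (a2 t) - v t (a t) = 0 := by
      intro t ht htimg
      have htn : t ≠ n := Finset.ne_of_mem_erase ht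
      by_cases hat : a t = ∅
      · have he : a2 t = ∅ := by
          simp only [ha2, if_neg htn, if_pos hat]
          rw [Finset.filter_eq_empty_iff]
          intro s hsan hgst
          exact htimg (Finset.mem_image.mpr ⟨s, hsan, hgst⟩)
        rw [he, hat]; ring
      · have he : a2 t = a t := by simp [ha2, htn, hat]
        rw [he]; ring
    have hsum2 : ∑ t ∈ Finset.univ.erase n, (v t (a2 t) - v t (a t)) =
        ∑ s ∈ a n, v (g s) {s} := by
      rw [← Finset.sum_subset himgsub hzero,
        Finset.sum_image (fun x hx y hy h => hginj hx hy h)]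
      apply Finset.sum_congr rfl
      intro s hsan
      rw [himg s hsan, (hg s hsan).2.1, hvE]
      ring
    have hfin : {y : ℝ | ∃ a' : Fin N → Bundle M, IsAssignment M N a' ∧ a' n = ∅ ∧
        y = ∑ n' ∈ Finset.univ.erase n, v n' (a' n')}.Finite := by
      apply Set.Finite.subset (Set.finite_range
        (fun a' : Fin N → Bundle M => ∑ n' ∈ Finset.univ.erase n, v n' (a' n')))
      rintro y ⟨a', _, _, rfl⟩
      exact ⟨a', rfl⟩
    have h1 : ∑ t ∈ Finset.univ.erase n, v t (a2 t) ≤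
        sSup {y : ℝ | ∃ a' : Fin N → Bundle M, IsAssignment M N a' ∧ a' n = ∅ ∧
            y = ∑ n' ∈ Finset.univ.erase n, v n' (a' n')} :=
      le_csSup hfin.bddAbove ⟨a2, ha2assign, ha2n, rfl⟩
    have h3 : ∑ s ∈ a n, kthHighest N (fun m => v m {s}) (M+1) ≤ ∑ s ∈ a n, v (g s) {s} :=
      Finset.sum_le_sum (fun s hsan => (hg s hsan).2.2)
    have h4 : ∑ t ∈ Finset.univ.erase n, (v t (a2 t) - v t (a t)) =
        ∑ t ∈ Finset.univ.erase n, v t (a2 t) - ∑ t ∈ Finset.univ.erase n, v t (a t) :=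
      Finset.sum_sub_distrib _ _
    linarith
  constructor
  · -- existence of an efficient full assignment
    set Asg := Finset.univ.filter (fun a : Fin N → Bundle M => IsAssignment M N a) with hAsg
    have hne : Asg.Nonempty := ⟨fun _ => ∅, by
      simp only [hAsg, Finset.mem_filter, Finset.mem_univ, true_and]
      intro x y _
      exact Finset.disjoint_empty_left _⟩
    obtain ⟨a0, ha0, hmax0⟩ := Finset.exists_max_image Asg (fun a => ∑ m, v m (a m)) hne
    set Eff := Asg.filter (fun a => ∀ a', IsAssignment M N a' →
      ∑ m, v m (a' m) ≤ ∑ m, v m (a m)) with hEff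
    have hEffne : Eff.Nonempty := ⟨a0, by
      rw [hEff, Finset.mem_filter]
      exact ⟨ha0, fun a' ha' => hmax0 a' (by
        rw [hAsg, Finset.mem_filter]; exact ⟨Finset.mem_univ _, ha'⟩)⟩⟩
    obtain ⟨a, haEff, hamax⟩ := Finset.exists_max_image Eff (fun a => ∑ m, (a m).card) hEffne
    rw [hEff, Finset.mem_filter, hAsg, Finset.mem_filter] at haEff
    obtain ⟨⟨_, haassign⟩, haeff⟩ := haEff
    refine ⟨a, ⟨haassign, haeff⟩, ?_⟩
    by_contra hfull
    push_neg at hfull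
    obtain ⟨s, hsnone⟩ := hfull
    obtain ⟨n0, hn0⟩ := hempty a haassign
    set a' := Function.update a n0 {s} with ha'
    have ha'assign : IsAssignment M N a' := by
      intro x y hxy
      rcases eq_or_ne x n0 with rfl | hx
      · rw [ha', Function.update_self, Function.update_of_ne hxy.symm]
        exact Finset.disjoint_singleton_left.mpr (hsnone y)
      rcases eq_or_ne y n0 with rfl | hy
      · rw [ha', Function.update_of_ne hx, Function.update_self]
        exact Finset.disjoint_singleton_right.mpr (hsnone x)
      · rw [ha', Function.update_of_ne hx, Function.update_of_ne hy]
        exact haassign x y hxy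
    have e3 : ∑ m ∈ Finset.univ.erase n0, v m (a' m) = ∑ m ∈ Finset.univ.erase n0, v m (a m) :=
      Finset.sum_congr rfl (fun m hm => by
        rw [ha', Function.update_of_ne (Finset.ne_of_mem_erase hm)])
    have hval : ∑ m, v m (a m) ≤ ∑ m, v m (a' m) := by
      have e1 : v n0 (a' n0) + ∑ m ∈ Finset.univ.erase n0, v m (a' m) = ∑ m, v m (a' m) :=
        Finset.add_sum_erase _ (fun m => v m (a' m)) (Finset.mem_univ n0)
      have e2 : v n0 (a n0) + ∑ m ∈ Finset.univ.erase n0, v m (a m) = ∑ m, v m (a m) :=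
        Finset.add_sum_erase _ (fun m => v m (a m)) (Finset.mem_univ n0)
      have e4 : v n0 (a' n0) = v n0 {s} := by rw [ha', Function.update_self]
      have e5 : v n0 (a n0) = 0 := by rw [hn0, hvE]
      have := hv0 n0 {s}
      linarith [e1, e2, e3]
    have ha'eff : ∀ a'', IsAssignment M N a'' → ∑ m, v m (a'' m) ≤ ∑ m, v m (a' m) :=
      fun a'' h => le_trans (haeff a'' h) hval
    have hcard : ∑ m, (a m).card < ∑ m, (a' m).card := by
      have e1 : (a' n0).card + ∑ m ∈ Finset.univ.erase n0, (a' m).card = ∑ m, (a' m).card :=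
        Finset.add_sum_erase _ (fun m => (a' m).card) (Finset.mem_univ n0)
      have e2 : (a n0).card + ∑ m ∈ Finset.univ.erase n0, (a m).card = ∑ m, (a m).card :=
        Finset.add_sum_erase _ (fun m => (a m).card) (Finset.mem_univ n0)
      have e3' : ∑ m ∈ Finset.univ.erase n0, (a' m).card =
          ∑ m ∈ Finset.univ.erase n0, (a m).card :=
        Finset.sum_congr rfl (fun m hm => by
          rw [ha', Function.update_of_ne (Finset.ne_of_mem_erase hm)])
      have e4 : (a' n0).card = 1 := by rw [ha', Function.update_self]; simp
      have e5 : (a n0).card = 0 := by rw [hn0]; simp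
      omega
    have hmem' : a' ∈ Eff := by
      rw [hEff, Finset.mem_filter, hAsg, Finset.mem_filter]
      exact ⟨⟨Finset.mem_univ _, ha'assign⟩, ha'eff⟩
    have := hamax a' hmem'
    omega
  · intro a haeff hfull
    have haassign := haeff.1
    have hcover : Finset.univ.biUnion a = Finset.univ := by
      apply Finset.eq_univ_iff_forall.mpr
      intro s
      obtain ⟨n, hn⟩ := hfull s
      exact Finset.mem_biUnion.mpr ⟨n, Finset.mem_univ n, hn⟩
    have hpd : Set.PairwiseDisjoint ((Finset.univ : Finset (Fin N)) : Set (Fin N)) a :=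
      fun x _ y _ hxy => haassign x y hxy
    have hsplit : ∑ s : Fin M, kthHighest N (fun n => v n {s}) (M+1) =
        ∑ n : Fin N, ∑ s ∈ a n, kthHighest N (fun m => v m {s}) (M+1) := by
      conv_lhs => rw [← hcover]
      exact Finset.sum_biUnion hpd
    have hmain : ∑ s : Fin M, kthHighest N (fun n => v n {s}) (M+1) ≤ vcgRevenue M N v a := by
      rw [vcgRevenue, hsplit]
      exact Finset.sum_le_sum (fun n _ => keybound a haassign n)
    refine ⟨hmain, ?_⟩
    have hrg : rankGuarantee M N (Finset.univ.image fun s : Fin M => ({s} : Bundle M)) v (M+1)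
        ≤ ∑ s : Fin M, kthHighest N (fun n => v n {s}) (M+1) := by
      rw [rankGuarantee, maxAlloc]
      apply Real.sSup_le
      · rintro y ⟨X, ⟨hXsub, _⟩, rfl⟩
        calc ∑ b ∈ X, kthHighest N (fun n => v n b) (M+1)
            ≤ ∑ b ∈ Finset.univ.image (fun s : Fin M => ({s} : Bundle M)),
                kthHighest N (fun n => v n b) (M+1) :=
              Finset.sum_le_sum_of_subset_of_nonneg hXsub (fun b _ _ =>
                kthHighest_nonneg _ (fun m => hv0 m b) hMN (by omega))
          _ = ∑ s : Fin M, kthHighest N (fun n => v n {s}) (M+1) :=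
              Finset.sum_image (fun x _ y _ h => Finset.singleton_injective h)
      · exact Finset.sum_nonneg (fun s _ => kthHighest_nonneg _ (fun m => hv0 m _) hMN (by omega))
    exact le_trans hrg hmain


end RankGuaranteedAuctions
end
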